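/- Let f = sec(2x), g = 2 tan(2x), and let (fD) denote the operator φ ↦ f·φ'. For all n ≥ 1, (fD)^n(f) = n! Σ_{k=0}^{⌊n/2⌋} H(n,k) f^{n+1+2k} g^{n−2k}, where H(n,k) = C(2k,k) C(n,2k). -/

import Mathlib

open Finset

lemma Hfact (n k : ℕ) (h : 2*k ≤ n) :
    (((2*k).choose k : ℝ)) * (n.choose (2*k)) =
      (n.factorial : ℝ) / ((k.factorial : ℝ)^2 * ((n - 2*k).factorial : ℝ)) := by
  have h1 : (((2*k).choose k : ℝ)) = ((2*k).factorial : ℝ) / (k.factorial * k.factorial) := by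
    rw [Nat.cast_choose ℝ (by omega : k ≤ 2*k), (by omega : 2*k - k = k)]
  have h2 : ((n.choose (2*k) : ℝ)) = (n.factorial : ℝ) / ((2*k).factorial * (n - 2*k).factorial) := by
    rw [Nat.cast_choose ℝ h]
  rw [h1, h2]
  have := Nat.factorial_pos (2*k)
  have := Nat.factorial_pos k
  have := Nat.factorial_pos (n - 2*k)
  field_simp

lemma coeff (n k : ℕ) (h : 2*k+2 ≤ n+1) :
    ((n+1).factorial : ℝ) * ((2*(k+1)).choose (k+1)) * ((n+1).choose (2*(k+1)))
    = (n.factorial : ℝ) * (((2*(k+1)).choose (k+1) : ℝ) * ((n.choose (2*(k+1))) : ℝ)) * (n+3+2*k)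
      + (n.factorial : ℝ) * (((2*k).choose k : ℝ) * ((n.choose (2*k)) : ℝ)) * 4 * ((n - 2*k : ℕ) : ℝ) := by
  rcases Nat.lt_or_ge n (2*k+2) with hc | hc
  · -- n = 2k+1
    have hn : n = 2*k+1 := by omega
    subst hn
    have hz : (2*k+1).choose (2*(k+1)) = 0 := Nat.choose_eq_zero_of_lt (by omega)
    have hs : (2*k+1) - 2*k = 1 := by omega
    have hone : (2*k+1+1).choose (2*(k+1)) = 1 := by
      rw [(by omega : 2*(k+1) = 2*k+1+1)]; exact Nat.choose_self _
    have hch : (2*k+1).choose (2*k) = 2*k+1 := Nat.choose_succ_self_right (2*k)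
    have hcb : (2*(k+1)) * (2*(k+1)).choose (k+1) = 4 * (2*k+1) * ((2*k).choose k) := by
      have h5 := Nat.succ_mul_centralBinom_succ k
      rw [Nat.centralBinom_eq_two_mul_choose, Nat.centralBinom_eq_two_mul_choose] at h5
      calc 2*(k+1) * (2*(k+1)).choose (k+1) = 2*((k+1) * (2*(k+1)).choose (k+1)) := by ring
        _ = 2*(2*(2*k+1) * ((2*k).choose k)) := by rw [h5]
        _ = 4 * (2*k+1) * ((2*k).choose k) := by ring
    rw [hz, hone, hch, hs]
    rw [(by omega : 2*k+1+1 = (2*k+1)+1), Nat.factorial_succ (2*k+1)]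
    have hcb' : ((2*(k+1)) : ℝ) * ((2*(k+1)).choose (k+1) : ℝ) = 4 * (2*(k:ℝ)+1) * ((2*k).choose k : ℝ) := by
      exact_mod_cast congrArg (Nat.cast : ℕ → ℝ) hcb
    push_cast
    push_cast at hcb'
    linear_combination ((2*k+1).factorial : ℝ) * hcb'
  · obtain ⟨d, hd⟩ : ∃ d, n = 2*k+2+d := ⟨n - (2*k+2), by omega⟩
    subst hd
    rw [mul_assoc, mul_assoc, Hfact _ _ (by omega), Hfact _ _ (by omega), Hfact _ _ (by omega),
      (by omega : 2*k+2+d+1 - 2*(k+1) = d+1), (by omega : 2*k+2+d - 2*(k+1) = d),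
      (by omega : 2*k+2+d - 2*k = d+2)]
    have e1 : ((2*k+2+d+1).factorial : ℝ) = (2*k+2+d+1) * (2*k+2+d).factorial := by
      rw [(by omega : 2*k+2+d+1 = (2*k+2+d)+1), Nat.factorial_succ]; push_cast; ring
    have e2 : ((k+1).factorial : ℝ) = (k+1) * k.factorial := by
      rw [Nat.factorial_succ]; push_cast; ring
    have e3 : ((d+2).factorial : ℝ) = (d+2) * ((d+1) * d.factorial) := by
      rw [(by omega : d+2 = (d+1)+1), Nat.factorial_succ, Nat.factorial_succ]; push_cast; ring
    have e4 : ((d+1).factorial : ℝ) = (d+1) * d.factorial := by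
      rw [Nat.factorial_succ]; push_cast; ring
    rw [e1, e2, e3, e4]
    have p1 : (((2*k+2+d).factorial : ℝ)) ≠ 0 := Nat.cast_ne_zero.2 (Nat.factorial_ne_zero _)
    have p2 : ((k.factorial : ℝ)) ≠ 0 := Nat.cast_ne_zero.2 (Nat.factorial_ne_zero _)
    have p3 : ((d.factorial : ℝ)) ≠ 0 := Nat.cast_ne_zero.2 (Nat.factorial_ne_zero _)
    have pk : ((k:ℝ)+1) ≠ 0 := by positivity
    have pd1 : ((d:ℝ)+1) ≠ 0 := by positivity
    have pd2 : ((d:ℝ)+2) ≠ 0 := by positivity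
    push_cast
    field_simp
    ring

lemma keysum (n : ℕ) (F G : ℝ) :
    (n.factorial : ℝ) * ∑ k ∈ range (n/2+1),
      ((2*k).choose k : ℝ) * (n.choose (2*k)) *
        (((n:ℝ)+1+2*k) * F^(n+2+2*k) * G^(n+1-2*k)
          + 4 * ((n - 2*k : ℕ) : ℝ) * F^(n+4+2*k) * G^(n-2*k-1))
    = ((n+1).factorial : ℝ) * ∑ k ∈ range ((n+1)/2+1),
        ((2*k).choose k : ℝ) * ((n+1).choose (2*k)) * F^(n+2+2*k) * G^(n+1-2*k) := by
  set A : ℕ → ℝ := fun k => (n.factorial : ℝ) * (((2*k).choose k : ℝ) * (n.choose (2*k))) *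
      ((n:ℝ)+1+2*k) * F^(n+2+2*k) * G^(n+1-2*k) with hA
  set B : ℕ → ℝ := fun k => (n.factorial : ℝ) * (((2*k).choose k : ℝ) * (n.choose (2*k))) *
      (4 * ((n - 2*k : ℕ) : ℝ)) * F^(n+4+2*k) * G^(n-2*k-1) with hB
  set T : ℕ → ℝ := fun k => ((n+1).factorial : ℝ) * (((2*k).choose k : ℝ) * ((n+1).choose (2*k))) *
      F^(n+2+2*k) * G^(n+1-2*k) with hT
  have hL : (n.factorial : ℝ) * ∑ k ∈ range (n/2+1),
      ((2*k).choose k : ℝ) * (n.choose (2*k)) *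
        (((n:ℝ)+1+2*k) * F^(n+2+2*k) * G^(n+1-2*k)
          + 4 * ((n - 2*k : ℕ) : ℝ) * F^(n+4+2*k) * G^(n-2*k-1))
      = (∑ k ∈ range (n/2+1), A k) + ∑ k ∈ range (n/2+1), B k := by
    rw [Finset.mul_sum, ← Finset.sum_add_distrib]
    refine Finset.sum_congr rfl fun k _ => ?_
    simp only [hA, hB]; ring
  have hRT : ((n+1).factorial : ℝ) * ∑ k ∈ range ((n+1)/2+1),
      ((2*k).choose k : ℝ) * ((n+1).choose (2*k)) * F^(n+2+2*k) * G^(n+1-2*k)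
      = ∑ k ∈ range ((n+1)/2+1), T k := by
    rw [Finset.mul_sum]
    refine Finset.sum_congr rfl fun k _ => ?_
    simp only [hT]; ring
  have hAT0 : A 0 = T 0 := by
    simp only [hA, hT, Nat.choose_zero_right, Nat.choose_self, mul_zero, Nat.mul_zero]
    push_cast [Nat.factorial_succ, Nat.choose_zero_right]
    ring
  have hstep : ∀ i, 2*i + 2 ≤ n + 1 → T (i+1) = A (i+1) + B i := by
    intro i hi
    have e1 : n+2+2*(i+1) = n+4+2*i := by omega
    have e2 : n+1-2*(i+1) = n-2*i-1 := by omega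
    simp only [hA, hB, hT, e1, e2]
    have hco := coeff n i hi
    push_cast
    push_cast at hco
    linear_combination (F^(n+4+2*i) * G^(n-2*i-1)) * hco
  rw [hL, hRT]
  rcases Nat.even_or_odd n with ⟨m, hm⟩ | ⟨m, hm⟩
  · have h2 : n/2 = m := by omega
    have h3 : (n+1)/2 = m := by omega
    rw [h2, h3, Finset.sum_range_succ' A m, Finset.sum_range_succ B m,
      Finset.sum_range_succ' T m]
    have hBm : B m = 0 := by
      simp only [hB]
      have : n - 2*m = 0 := by omega
      rw [this]; norm_num
    have hsum : ∑ i ∈ range m, T (i+1) = ∑ i ∈ range m, (A (i+1) + B i) := by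
      refine Finset.sum_congr rfl fun i hi => ?_
      exact hstep i (by simp at hi; omega)
    rw [hsum, Finset.sum_add_distrib, hBm, hAT0]
    ring
  · have h2 : n/2 = m := by omega
    have h3 : (n+1)/2 = m+1 := by omega
    rw [h2, h3, Finset.sum_range_succ' A m, Finset.sum_range_succ' T (m+1)]
    have hsum : ∑ i ∈ range (m+1), T (i+1) = ∑ i ∈ range (m+1), (A (i+1) + B i) := by
      refine Finset.sum_congr rfl fun i hi => ?_
      exact hstep i (by simp at hi; omega)
    have hAm1 : A (m+1) = 0 := by
      simp only [hA]
      have : n.choose (2*(m+1)) = 0 := Nat.choose_eq_zero_of_lt (by omega)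
      rw [this]; norm_num
    rw [hsum, Finset.sum_add_distrib, Finset.sum_range_succ (fun i => A (i+1)) m, hAm1, hAT0]
    ring

/-- The operator `fD : φ ↦ f·φ'` where `f = sec(2x)`. -/
noncomputable def fDop (φ : ℝ → ℝ) : ℝ → ℝ :=
  fun x => (Real.cos (2 * x))⁻¹ * deriv φ x

lemma sec_hasDeriv (x : ℝ) (hx : Real.cos (2*x) ≠ 0) :
    HasDerivAt (fun y : ℝ => (Real.cos (2*y))⁻¹)
      ((Real.cos (2*x))⁻¹ * (2 * Real.tan (2*x))) x := by
  have h2 : HasDerivAt (fun y : ℝ => 2*y) 2 x := by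
    simpa using (hasDerivAt_id x).const_mul (2:ℝ)
  have hc : HasDerivAt (fun y : ℝ => Real.cos (2*y)) (-Real.sin (2*x) * 2) x :=
    (Real.hasDerivAt_cos (2*x)).comp x h2
  have h := hc.inv hx
  refine h.congr_deriv ?_
  rw [Real.tan_eq_sin_div_cos]
  field_simp

lemma tan_hasDeriv (x : ℝ) (hx : Real.cos (2*x) ≠ 0) :
    HasDerivAt (fun y : ℝ => 2 * Real.tan (2*y))
      (4 * ((Real.cos (2*x))⁻¹)^2) x := by
  have h2 : HasDerivAt (fun y : ℝ => 2*y) 2 x := by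
    simpa using (hasDerivAt_id x).const_mul (2:ℝ)
  have ht : HasDerivAt (fun y : ℝ => Real.tan (2*y)) (1 / Real.cos (2*x) ^ 2 * 2) x :=
    (Real.hasDerivAt_tan hx).comp x h2
  have h := ht.const_mul (2:ℝ)
  refine h.congr_deriv ?_
  field_simp
  ring

lemma main_lemma : ∀ (n : ℕ) (x : ℝ), Real.cos (2*x) ≠ 0 →
    fDop^[n] (fun x : ℝ => (Real.cos (2 * x))⁻¹) x =
      (n.factorial : ℝ) * ∑ k ∈ Finset.range (n / 2 + 1),
        ((2 * k).choose k : ℝ) * (n.choose (2 * k)) *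
          ((Real.cos (2 * x))⁻¹) ^ (n + 1 + 2 * k) *
          (2 * Real.tan (2 * x)) ^ (n - 2 * k) := by
  intro n
  induction n with
  | zero =>
    intro x hx
    simp
  | succ n ih =>
    intro x hx
    rw [Function.iterate_succ_apply']
    show (Real.cos (2*x))⁻¹ * deriv (fDop^[n] (fun x : ℝ => (Real.cos (2 * x))⁻¹)) x = _
    have hU : IsOpen {y : ℝ | Real.cos (2*y) ≠ 0} := by
      have hcont : Continuous fun y : ℝ => Real.cos (2*y) := by continuity
      exact isOpen_compl_singleton.preimage hcont
    have hev : (fDop^[n] (fun x : ℝ => (Real.cos (2 * x))⁻¹)) =ᶠ[nhds x]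
        (fun y => ∑ k ∈ Finset.range (n / 2 + 1),
          ((n.factorial : ℝ) * (((2 * k).choose k : ℝ) * (n.choose (2 * k)))) *
            (((Real.cos (2 * y))⁻¹) ^ (n + 1 + 2 * k) * (2 * Real.tan (2 * y)) ^ (n - 2 * k))) := by
      refine Filter.eventuallyEq_of_mem (hU.mem_nhds hx) fun y hy => ?_
      rw [ih y hy, Finset.mul_sum]
      exact Finset.sum_congr rfl fun k _ => by ring
    rw [hev.deriv_eq]
    have hD : HasDerivAt
        (fun y => ∑ k ∈ Finset.range (n / 2 + 1),
          ((n.factorial : ℝ) * (((2 * k).choose k : ℝ) * (n.choose (2 * k)))) *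
            (((Real.cos (2 * y))⁻¹) ^ (n + 1 + 2 * k) * (2 * Real.tan (2 * y)) ^ (n - 2 * k)))
        (∑ k ∈ Finset.range (n / 2 + 1),
          ((n.factorial : ℝ) * (((2 * k).choose k : ℝ) * (n.choose (2 * k)))) *
            ((↑(n + 1 + 2 * k) * ((Real.cos (2 * x))⁻¹) ^ (n + 1 + 2 * k - 1) *
                ((Real.cos (2*x))⁻¹ * (2 * Real.tan (2*x)))) * (2 * Real.tan (2 * x)) ^ (n - 2 * k)
             + ((Real.cos (2 * x))⁻¹) ^ (n + 1 + 2 * k) *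
                (↑(n - 2 * k) * (2 * Real.tan (2 * x)) ^ (n - 2 * k - 1) *
                  (4 * ((Real.cos (2*x))⁻¹)^2)))) x := by
      refine HasDerivAt.fun_sum fun k _ => ?_
      exact (((sec_hasDeriv x hx).pow (n + 1 + 2 * k)).mul
        ((tan_hasDeriv x hx).pow (n - 2 * k))).const_mul _
    rw [hD.deriv]
    rw [← keysum n ((Real.cos (2*x))⁻¹) (2 * Real.tan (2*x)), Finset.mul_sum, Finset.mul_sum]
    refine Finset.sum_congr rfl fun k hk => ?_
    have hk2 : 2 * k ≤ n := by
      have := Finset.mem_range.1 hk; omega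
    rw [(show n + 1 + 2*k - 1 = n + 2*k by omega),
        (show n + 1 - 2*k = (n - 2*k) + 1 by omega)]
    push_cast
    ring

/-- For all `n ≥ 1` and `x` with `cos(2x) ≠ 0`,
`(fD)^n(f) = n! Σ_{k=0}^{⌊n/2⌋} H(n,k) f^{n+1+2k} g^{n−2k}`,
where `f = sec(2x)`, `g = 2 tan(2x)` and `H(n,k) = C(2k,k) C(n,2k)`. -/
theorem fD_iterate_sec (n : ℕ) (hn : 1 ≤ n) (x : ℝ) (hx : Real.cos (2 * x) ≠ 0) :
    fDop^[n] (fun x : ℝ => (Real.cos (2 * x))⁻¹) x =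
      (n.factorial : ℝ) * ∑ k ∈ Finset.range (n / 2 + 1),
        ((2 * k).choose k : ℝ) * (n.choose (2 * k)) *
          ((Real.cos (2 * x))⁻¹) ^ (n + 1 + 2 * k) *
          (2 * Real.tan (2 * x)) ^ (n - 2 * k) := by
  exact main_lemma n x hx
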